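/- For every k ∈ {1,…,n−2}, every k' ∈ {k+1,…,n−1}, every ε ∈ (0,1) and every δ ∈ (0,1): if Δ(ε;k,δ) > 1 − n(b−c)/((n−1)·b), then V_k(ε,δ) > W_{k'}(ε,δ). That is, whenever the incumbent tolerant cooperative strategy T_k strictly beats the defector, it also strictly beats every less tolerant conditional cooperator mutant T_{k'} with k' > k. -/

import Mathlib

open Finset

/-- `ψ(j,q,ε) = (j choose q)·ε^q·(1−ε)^(j−q)`. -/
noncomputable def psi (j q : ℕ) (ε : ℝ) : ℝ :=
  (j.choose q : ℝ) * ε ^ q * (1 - ε) ^ (j - q)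

/-- One-shot expected payoff of cooperation against `n−1` error-prone cooperators. -/
noncomputable def FC (n : ℕ) (b c ε : ℝ) : ℝ :=
  (1 - ε) * ∑ q ∈ range n, psi (n - 1) q ε * (b * ((n : ℝ) - q) / n - c) +
    ε * ∑ q ∈ range n, psi (n - 1) q ε * (b * ((n : ℝ) - 1 - q) / n)

/-- One-shot expected payoff of defection against `n−1` error-prone cooperators. -/
noncomputable def FD (n : ℕ) (b ε : ℝ) : ℝ :=
  ∑ q ∈ range n, psi (n - 1) q ε * (b * ((n : ℝ) - 1 - q) / n)

/-- Repeated-game payoff of the incumbent `T_k` strategy in a `T_k` population. -/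
noncomputable def Vk (n k : ℕ) (b c ε δ : ℝ) : ℝ :=
  FC n b c ε /
    (1 - δ * ∑ q ∈ range (n - k - 1), psi (n - 1) q ε -
      δ * (1 - ε) * psi (n - 1) (n - k - 1) ε)

/-- Repeated-game payoff of a single defector (`T_n`) mutant in a `T_k` population. -/
noncomputable def Wn (n k : ℕ) (b ε δ : ℝ) : ℝ :=
  FD n b ε / (1 - δ * ∑ q ∈ range (n - k - 1), psi (n - 1) q ε)

/-- Repeated-game payoff of a single less tolerant `T_{k'}` mutant (`k < k' ≤ n−1`)
in a `T_k` population. -/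
noncomputable def Wk' (n k k' : ℕ) (b c ε δ : ℝ) : ℝ :=
  (FC n b c ε +
      δ * (∑ q ∈ Icc (n - k') (n - k - 2), psi (n - 1) q ε) * Wn n k b ε δ) /
    (1 - δ * ∑ q ∈ range (n - k'), psi (n - 1) q ε)

/-- The continuation factor `Δ(ε;k,δ)`. -/
noncomputable def Delta (n k : ℕ) (ε δ : ℝ) : ℝ :=
  δ * (1 - ε) * psi (n - 1) (n - k - 1) ε /
    (1 - δ * ∑ q ∈ range (n - k - 1), psi (n - 1) q ε)

lemma psi_nonneg (j q : ℕ) {ε : ℝ} (h0 : 0 ≤ ε) (h1 : ε ≤ 1) : 0 ≤ psi j q ε := by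
  unfold psi
  have : (0:ℝ) ≤ 1 - ε := by linarith
  positivity

lemma psi_pos {j q : ℕ} (hq : q ≤ j) {ε : ℝ} (h0 : 0 < ε) (h1 : ε < 1) : 0 < psi j q ε := by
  unfold psi
  have h2 : (0:ℝ) < 1 - ε := by linarith
  have h3 : 0 < (j.choose q : ℝ) := by exact_mod_cast Nat.choose_pos hq
  positivity

lemma sum_psi (m : ℕ) (ε : ℝ) : ∑ q ∈ range (m+1), psi m q ε = 1 := by
  have h := add_pow ε (1 - ε) m
  have h1 : ε + (1 - ε) = 1 := by ring
  rw [h1, one_pow] at h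
  rw [show (∑ q ∈ range (m+1), psi m q ε) =
      ∑ q ∈ range (m+1), ε ^ q * (1-ε) ^ (m-q) * (m.choose q : ℝ) from
    Finset.sum_congr rfl (fun q _ => by unfold psi; ring), ← h]

lemma sum_mul_psi (m : ℕ) (ε : ℝ) :
    ∑ q ∈ range (m+2), (q:ℝ) * psi (m+1) q ε = ((m:ℝ)+1) * ε := by
  rw [Finset.sum_range_succ']
  simp only [Nat.cast_zero, zero_mul, add_zero]
  have key : ∀ r ∈ range (m+1), ((r+1:ℕ):ℝ) * psi (m+1) (r+1) ε
      = ((m:ℝ)+1) * ε * psi m r ε := by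
    intro r hr
    unfold psi
    have hc : ((m:ℝ)+1) * (m.choose r : ℝ) = ((m+1).choose (r+1) : ℝ) * ((r:ℝ)+1) := by
      have h2 := Nat.add_one_mul_choose_eq m r
      exact_mod_cast congrArg (Nat.cast : ℕ → ℝ) h2
    have hsub : m + 1 - (r + 1) = m - r := by omega
    rw [hsub]
    push_cast
    linear_combination (-(ε^(r+1) * (1-ε)^(m-r))) * hc
  rw [Finset.sum_congr rfl key, ← Finset.mul_sum, sum_psi, mul_one]

lemma sum_psi_linear (m : ℕ) (ε a t : ℝ) :
    ∑ q ∈ range (m+2), psi (m+1) q ε * (a + t * q) = a + t * (((m:ℝ)+1) * ε) := by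
  have h0 := sum_psi (m+1) ε
  have h1 := sum_mul_psi m ε
  have hc : ∀ q ∈ range (m+2), psi (m+1) q ε * (a + t*q)
      = a * psi (m+1) q ε + t * ((q:ℝ) * psi (m+1) q ε) := fun q _ => by ring
  rw [Finset.sum_congr rfl hc, Finset.sum_add_distrib, ← Finset.mul_sum, ← Finset.mul_sum,
    h1]
  rw [show m + 2 = (m+1) + 1 from rfl, h0]
  ring

lemma FD_eq (n : ℕ) (hn : 2 ≤ n) (b ε : ℝ) :
    FD n b ε = (1 - ε) * (((n:ℝ) - 1) * b / n) := by
  obtain ⟨m, rfl⟩ : ∃ m, n = m + 2 := ⟨n - 2, by omega⟩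
  have hN : ((m:ℝ)+2) ≠ 0 := by positivity
  unfold FD
  have e1 : ∀ q ∈ range (m+2), psi (m+2-1) q ε * (b * (((m+2:ℕ):ℝ) - 1 - q) / ((m+2:ℕ):ℝ))
      = psi (m+1) q ε * ((b * ((m:ℝ)+1) / ((m:ℝ)+2)) + (-(b/((m:ℝ)+2))) * q) := by
    intro q _
    rw [show m + 2 - 1 = m + 1 from rfl]
    push_cast
    field_simp
    ring_nf
  rw [Finset.sum_congr rfl e1, sum_psi_linear]
  push_cast
  field_simp
  ring

lemma FC_eq (n : ℕ) (hn : 2 ≤ n) (b c ε : ℝ) :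
    FC n b c ε = (1 - ε) * (b - c) := by
  obtain ⟨m, rfl⟩ : ∃ m, n = m + 2 := ⟨n - 2, by omega⟩
  have hN : ((m:ℝ)+2) ≠ 0 := by positivity
  unfold FC
  have e1 : ∀ q ∈ range (m+2), psi (m+2-1) q ε * (b * (((m+2:ℕ):ℝ) - q) / ((m+2:ℕ):ℝ) - c)
      = psi (m+1) q ε * ((b - c) + (-(b/((m:ℝ)+2))) * q) := by
    intro q _
    rw [show m + 2 - 1 = m + 1 from rfl]
    push_cast
    field_simp
    ring_nf
  have e2 : ∀ q ∈ range (m+2), psi (m+2-1) q ε * (b * (((m+2:ℕ):ℝ) - 1 - q) / ((m+2:ℕ):ℝ))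
      = psi (m+1) q ε * ((b * ((m:ℝ)+1) / ((m:ℝ)+2)) + (-(b/((m:ℝ)+2))) * q) := by
    intro q _
    rw [show m + 2 - 1 = m + 1 from rfl]
    push_cast
    field_simp
    ring_nf
  rw [Finset.sum_congr rfl e1, Finset.sum_congr rfl e2, sum_psi_linear, sum_psi_linear]
  field_simp
  ring


set_option maxHeartbeats 1000000 in
/-- For every `k ∈ {1,…,n−2}`, `k' ∈ {k+1,…,n−1}`, `ε ∈ (0,1)`, `δ ∈ (0,1)`:
if `Δ(ε;k,δ) > 1 − n(b−c)/((n−1)b)` then `V_k(ε,δ) > W_{k'}(ε,δ)`.  Whenever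
the incumbent tolerant strategy `T_k` strictly beats the defector, it also
strictly beats every less tolerant conditional cooperator mutant. -/
theorem Vk_beats_harder_mutants (n : ℕ) (hn : 3 ≤ n) (b c : ℝ)
    (hb0 : 0 < b / n) (hbc : b / n < c) (hcb : c < b)
    (k : ℕ) (hk1 : 1 ≤ k) (hk2 : k ≤ n - 2)
    (k' : ℕ) (hk'1 : k + 1 ≤ k') (hk'2 : k' ≤ n - 1)
    (ε : ℝ) (hε0 : 0 < ε) (hε1 : ε < 1)
    (δ : ℝ) (hδ0 : 0 < δ) (hδ1 : δ < 1)
    (h : Delta n k ε δ > 1 - n * (b - c) / (((n : ℝ) - 1) * b)) :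
    Vk n k b c ε δ > Wk' n k k' b c ε δ := by
  have hnR : (3:ℝ) ≤ (n:ℝ) := by exact_mod_cast hn
  have hn0 : (0:ℝ) < (n:ℝ) := by linarith
  have hb : 0 < b := by
    have := mul_pos hb0 hn0
    rwa [div_mul_cancel₀ _ (ne_of_gt hn0)] at this
  have hε1' : (0:ℝ) < 1 - ε := by linarith
  -- closed forms
  have hFC : FC n b c ε = (1 - ε) * (b - c) := FC_eq n (by omega) b c ε
  have hFD : FD n b ε = (1 - ε) * (((n:ℝ) - 1) * b / n) := FD_eq n (by omega) b ε
  have hc0 : 0 < c := lt_trans hb0 hbc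
  have hFCpos : 0 < FC n b c ε := by rw [hFC]; apply mul_pos hε1'; linarith
  have hFDpos : 0 < FD n b ε := by
    rw [hFD]; apply mul_pos hε1'; apply div_pos _ hn0; apply mul_pos _ hb; linarith
  -- sums of psi
  have hpsinn : ∀ q, 0 ≤ psi (n-1) q ε := fun q => psi_nonneg _ _ hε0.le hε1.le
  have hsum1 : ∑ q ∈ range n, psi (n-1) q ε = 1 := by
    have := sum_psi (n-1) ε; rwa [show n - 1 + 1 = n by omega] at this
  have hS_le : ∀ a, a ≤ n → ∑ q ∈ range a, psi (n-1) q ε ≤ 1 := by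
    intro a ha
    calc ∑ q ∈ range a, psi (n-1) q ε
        ≤ ∑ q ∈ range n, psi (n-1) q ε :=
          Finset.sum_le_sum_of_subset_of_nonneg
            (Finset.range_subset_range.mpr ha) (fun i _ _ => hpsinn i)
      _ = 1 := hsum1
  have hS_nn : ∀ a, (0:ℝ) ≤ ∑ q ∈ range a, psi (n-1) q ε :=
    fun a => Finset.sum_nonneg fun i _ => hpsinn i
  have hψpos : 0 < psi (n-1) (n-k-1) ε := psi_pos (by omega) hε0 hε1
  -- unfold definitions
  unfold Delta at h
  unfold Vk Wk' Wn
  set ψ := psi (n-1) (n-k-1) ε with hψdef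
  set S1 := ∑ q ∈ range (n-k-1), psi (n-1) q ε with hS1def
  set S2 := ∑ q ∈ range (n-k'), psi (n-1) q ε with hS2def
  set E := ∑ q ∈ Icc (n-k') (n-k-2), psi (n-1) q ε with hEdef
  have hEnn : 0 ≤ E := by rw [hEdef]; exact Finset.sum_nonneg fun i _ => hpsinn i
  clear_value ψ S1 S2 E
  have hSsucc : ∑ q ∈ range (n-k), psi (n-1) q ε = S1 + ψ := by
    rw [show n-k = (n-k-1)+1 by omega, Finset.sum_range_succ, hS1def, hψdef]
  have hBpos : 0 < 1 - δ * S1 := by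
    have h1 := hS_le (n-k-1) (by omega)
    have h2 := hS_nn (n-k-1)
    nlinarith
  have hDpos : 0 < 1 - δ * S2 := by
    have h1 := hS_le (n-k') (by omega)
    have h2 := hS_nn (n-k')
    nlinarith
  have hApos : 0 < 1 - δ * S1 - δ * (1-ε) * ψ := by
    have h1 := hS_le (n-k) (by omega)
    rw [hSsucc] at h1
    have h2 := hS_nn (n-k-1)
    have h3 : (1-ε) * ψ ≤ ψ := by nlinarith
    nlinarith
  have hE : E = S1 - S2 := by
    rw [hEdef, hS1def, hS2def, ← Finset.Ico_add_one_right_eq_Icc, show n-k-2+1 = n-k-1 by omega,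
      Finset.sum_Ico_eq_sub _ (by omega : n-k' ≤ n-k-1)]
  -- hypothesis in terms of FC/FD
  have hrepl : (n:ℝ) * (b - c) / (((n:ℝ) - 1) * b) = FC n b c ε / FD n b ε := by
    rw [hFC, hFD]
    have h1 : ((n:ℝ) - 1) ≠ 0 := by linarith
    have h2 : (1:ℝ) - ε ≠ 0 := ne_of_gt hε1'
    have hd1 : ((n:ℝ) - 1) * b ≠ 0 := by
      apply ne_of_gt; apply mul_pos _ hb; linarith
    have hd2 : (1 - ε) * (((n:ℝ) - 1) * b / n) ≠ 0 := by
      apply ne_of_gt; apply mul_pos hε1'; apply div_pos _ hn0; apply mul_pos _ hb; linarith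
    rw [div_eq_div_iff hd1 hd2]
    field_simp
  rw [hrepl] at h
  -- step 1: FD * A < FC * B
  have key1 : FD n b ε * (1 - δ * S1 - δ * (1-ε) * ψ) < FC n b c ε * (1 - δ * S1) := by
    have h1 : (1 - FC n b c ε / FD n b ε) * (1 - δ * S1) < δ * (1-ε) * ψ :=
      (lt_div_iff₀ hBpos).mp h
    have h2 : FD n b ε * ((1 - FC n b c ε / FD n b ε) * (1 - δ * S1))
        < FD n b ε * (δ * (1-ε) * ψ) := by
      exact mul_lt_mul_of_pos_left h1 hFDpos
    have h3 : FD n b ε * (FC n b c ε / FD n b ε) = FC n b c ε := by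
      rw [mul_comm, div_mul_cancel₀ _ (ne_of_gt hFDpos)]
    nlinarith [h2, h3]
  -- step 2: conclude
  rw [gt_iff_lt, div_lt_div_iff₀ hDpos hApos]
  have hWn : FD n b ε / (1 - δ * S1) * (1 - δ * S1 - δ * (1-ε) * ψ) < FC n b c ε := by
    rw [div_mul_eq_mul_div, div_lt_iff₀ hBpos]
    exact key1
  have hDB : 1 - δ * S2 = (1 - δ * S1) + δ * E := by rw [hE]; ring
  have step1 : δ * E * (FD n b ε / (1 - δ * S1) * (1 - δ * S1 - δ * (1-ε) * ψ))
      ≤ δ * E * FC n b c ε :=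
    mul_le_mul_of_nonneg_left hWn.le (mul_nonneg hδ0.le hEnn)
  have step2 : 0 < FC n b c ε * (δ * (1-ε) * ψ) :=
    mul_pos hFCpos (mul_pos (mul_pos hδ0 hε1') hψpos)
  calc (FC n b c ε + δ * E * (FD n b ε / (1 - δ * S1))) * (1 - δ * S1 - δ * (1-ε) * ψ)
      = FC n b c ε * (1 - δ * S1 - δ * (1-ε) * ψ)
        + δ * E * (FD n b ε / (1 - δ * S1) * (1 - δ * S1 - δ * (1-ε) * ψ)) := by ring
    _ ≤ FC n b c ε * (1 - δ * S1 - δ * (1-ε) * ψ) + δ * E * FC n b c ε := by linarith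
    _ < FC n b c ε * (1 - δ * S1) + δ * E * FC n b c ε := by nlinarith [step2]
    _ = FC n b c ε * (1 - δ * S2) := by rw [hDB]; ring
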